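/- Let p be an odd prime, 0 ≤ k ≤ p−1, and n > 1 even. The polynomial f_{n,k}(x) = k·∑_{j≥0} C(n−1,2j+1)(x^j − x^{j+1}) + 2·∑_{j≥0} C(n,2j) x^j, viewed in F_p[x], is self-reciprocal if and only if k = 0, or (k = 2 and n is not of the form 2lp for a positive integer l). -/

import Mathlib

open Polynomial Finset

/-- The polynomial `f_{n,k}` over `F_p`. -/
noncomputable def fnkP (p n k : ℕ) : Polynomial (ZMod p) :=
  Polynomial.C (k : ZMod p) * ∑ j ∈ range (n + 1),
      (Nat.choose (n - 1) (2 * j + 1) : Polynomial (ZMod p)) * (X ^ j - X ^ (j + 1))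
    + 2 * ∑ j ∈ range (n + 1), (Nat.choose n (2 * j) : Polynomial (ZMod p)) * X ^ j

lemma coeff_fnkP (p n k : ℕ) (hn : 1 < n) {j : ℕ} (hj : 1 ≤ j) :
    (fnkP p n k).coeff j = (k : ZMod p) * ((n-1).choose (2*j+1) : ZMod p)
      - (k : ZMod p) * ((n-1).choose (2*j-1) : ZMod p) + 2 * (n.choose (2*j) : ZMod p) := by
  simp only [fnkP, coeff_add, coeff_C_mul, coeff_ofNat_mul, finset_sum_coeff, mul_sub, coeff_sub,
    coeff_natCast_mul, coeff_X_pow, mul_ite, mul_one, mul_zero]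
  have e1 : ∀ (c : ℕ → ZMod p), (∑ x ∈ range (n+1), if j = x then c x else 0)
      = if j ≤ n then c j else 0 := by
    intro c; rw [Finset.sum_ite_eq]; simp [Nat.lt_succ_iff]
  have e2 : (∑ x ∈ range (n+1), if j = x + 1 then ((n-1).choose (2*x+1) : ZMod p) else 0)
      = if j - 1 ≤ n then ((n-1).choose (2*(j-1)+1) : ZMod p) else 0 := by
    rw [show (∑ x ∈ range (n+1), if j = x + 1 then ((n-1).choose (2*x+1) : ZMod p) else 0)
        = ∑ x ∈ range (n+1), if j - 1 = x then ((n-1).choose (2*x+1) : ZMod p) else 0 from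
      Finset.sum_congr rfl fun x _ => if_congr (by omega) rfl rfl, Finset.sum_ite_eq]
    simp [Nat.lt_succ_iff]
  rw [Finset.sum_sub_distrib, e1, e2, e1, show 2*(j-1)+1 = 2*j-1 by omega]
  have z1 : 2*j+1 > n-1 → ((n-1).choose (2*j+1) : ZMod p) = 0 := fun h => by
    rw [Nat.choose_eq_zero_of_lt (by omega)]; simp
  have z2 : 2*j-1 > n-1 → ((n-1).choose (2*j-1) : ZMod p) = 0 := fun h => by
    rw [Nat.choose_eq_zero_of_lt (by omega)]; simp
  have z3 : 2*j > n → ((n).choose (2*j) : ZMod p) = 0 := fun h => by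
    rw [Nat.choose_eq_zero_of_lt (by omega)]; simp
  split_ifs with h1 h2 h3
  · ring
  · omega
  · rw [z1 (by omega), z3 (by omega)]; ring
  · rw [z1 (by omega), z2 (by omega), z3 (by omega)]; ring

lemma coeff_fnkP_zero (p n k : ℕ) (hn : 1 < n) :
    (fnkP p n k).coeff 0 = (k : ZMod p) * (((n-1 : ℕ)) : ZMod p) + 2 := by
  simp only [fnkP, coeff_add, coeff_C_mul, coeff_ofNat_mul, finset_sum_coeff, mul_sub, coeff_sub,
    coeff_natCast_mul, coeff_X_pow, mul_ite, mul_one, mul_zero]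
  have e1 : ∀ (c : ℕ → ZMod p), (∑ x ∈ range (n+1), if 0 = x then c x else 0) = c 0 := by
    intro c; rw [Finset.sum_ite_eq]; simp
  have e2 : (∑ x ∈ range (n+1), if (0:ℕ) = x + 1 then ((n-1).choose (2*x+1) : ZMod p) else 0)
      = 0 := by
    apply Finset.sum_eq_zero; intro x _; rw [if_neg (by omega)]
  rw [Finset.sum_sub_distrib, e1, e2, e1]
  simp [Nat.choose_one_right]

lemma coeff_fnkP_top (p n k m : ℕ) (hm : n = 2*m) (hmpos : 1 ≤ m) {j : ℕ} (hj : m < j) :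
    (fnkP p n k).coeff j = 0 := by
  rw [coeff_fnkP p n k (by omega) (by omega), Nat.choose_eq_zero_of_lt (by omega),
    Nat.choose_eq_zero_of_lt (by omega), Nat.choose_eq_zero_of_lt (by omega)]
  push_cast; ring

lemma coeff_fnkP_half (p n k m : ℕ) (hm : n = 2*m) (hmpos : 1 ≤ m) :
    (fnkP p n k).coeff m = 2 - (k : ZMod p) := by
  rw [coeff_fnkP p n k (by omega) hmpos, Nat.choose_eq_zero_of_lt (by omega),
    show 2*m-1 = n-1 by omega, Nat.choose_self, show 2*m = n by omega, Nat.choose_self]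
  push_cast; ring

lemma coeff_fnkP_mirror (p n k m : ℕ) (hm : n = 2*m) {j : ℕ} (hj1 : 1 ≤ j) (hj2 : j ≤ m - 1)
    (hm2 : 2 ≤ m) :
    (fnkP p n k).coeff j = (fnkP p n k).coeff (m - j)
      + (k : ZMod p) * ((n.choose (2*j+1) : ZMod p) - (n.choose (2*j-1) : ZMod p)) := by
  have hn : 1 < n := by omega
  have hn' : n - 1 + 1 = n := by omega
  rw [coeff_fnkP p n k hn hj1, coeff_fnkP p n k hn (show 1 ≤ m - j by omega)]
  -- symmetry rewrites
  have s1 : ((n-1).choose (2*(m-j)+1) : ZMod p) = ((n-1).choose (2*j-2) : ZMod p) := by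
    rw [show 2*(m-j)+1 = (n-1)-(2*j-2) by omega, Nat.choose_symm (by omega)]
  have s2 : ((n-1).choose (2*(m-j)-1) : ZMod p) = ((n-1).choose (2*j) : ZMod p) := by
    rw [show 2*(m-j)-1 = (n-1)-(2*j) by omega, Nat.choose_symm (by omega)]
  have s3 : ((n).choose (2*(m-j)) : ZMod p) = ((n).choose (2*j) : ZMod p) := by
    rw [show 2*(m-j) = n-(2*j) by omega, Nat.choose_symm (by omega)]
  rw [s1, s2, s3]
  -- Pascal rewrites
  have pas1 := Nat.choose_succ_succ' (n-1) (2*j)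
  rw [hn'] at pas1
  have pas2 := Nat.choose_succ_succ' (n-1) (2*j-2)
  rw [hn', show 2*j-2+1 = 2*j-1 by omega] at pas2
  have pas3 := Nat.choose_succ_succ' (n-1) (2*j-1)
  rw [hn', show 2*j-1+1 = 2*j by omega] at pas3
  have c1 : (n.choose (2*j+1) : ZMod p)
      = ((n-1).choose (2*j) : ZMod p) + ((n-1).choose (2*j+1) : ZMod p) := by
    rw [pas1]; push_cast; ring
  have c2 : (n.choose (2*j-1) : ZMod p)
      = ((n-1).choose (2*j-2) : ZMod p) + ((n-1).choose (2*j-1) : ZMod p) := by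
    rw [pas2]; push_cast; ring
  have c3 : (n.choose (2*j) : ZMod p)
      = ((n-1).choose (2*j-1) : ZMod p) + ((n-1).choose (2*j) : ZMod p) := by
    rw [pas3]; push_cast; ring
  rw [c1, c2, c3]; ring

lemma coeff_fnkP_two (p n : ℕ) (hn : 1 < n) (j : ℕ) :
    (fnkP p n 2).coeff j = 2 * (n.choose (2*j+1) : ZMod p) := by
  have hn' : n - 1 + 1 = n := by omega
  rcases Nat.eq_zero_or_pos j with rfl | hj
  · rw [coeff_fnkP_zero p n 2 hn, Nat.choose_one_right]
    have : ((n - 1 : ℕ) : ZMod p) = (n : ZMod p) - 1 := by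
      rw [Nat.cast_sub (by omega)]; simp
    rw [this]; push_cast; ring
  · rw [coeff_fnkP p n 2 hn hj]
    have pas1 := Nat.choose_succ_succ' (n-1) (2*j)
    rw [hn'] at pas1
    have pas3 := Nat.choose_succ_succ' (n-1) (2*j-1)
    rw [hn', show 2*j-1+1 = 2*j by omega] at pas3
    rw [pas1, pas3]; push_cast; ring

lemma coeff_fnkP_zero_k (p n : ℕ) (hn : 1 < n) (j : ℕ) :
    (fnkP p n 0).coeff j = 2 * (n.choose (2*j) : ZMod p) := by
  rcases Nat.eq_zero_or_pos j with rfl | hj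
  · rw [coeff_fnkP_zero p n 0 hn]; simp
  · rw [coeff_fnkP p n 0 hn hj]; push_cast; ring

/-- Lucas-type consequence: `C(p^s * t, p^s) ≡ t (mod p)`. -/
lemma cast_choose_pow (p s t : ℕ) (hp : p.Prime) :
    (((p^s * t).choose (p^s) : ℕ) : ZMod p) = (t : ZMod p) := by
  haveI : Fact p.Prime := ⟨hp⟩
  have h := Choose.choose_modEq_choose_mul_prod_range_choose
    (p := p) (n := p^s*t) (k := p^s) s
  have hps : 0 < p ^ s := pow_pos hp.pos s
  rw [Nat.mul_div_cancel_left t hps, Nat.div_self hps, Nat.choose_one_right] at h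
  have hprod : ∀ i ∈ range s, ((p^s*t) / p^i % p).choose (p^s / p^i % p) = 1 := by
    intro i hi
    have his : i < s := mem_range.mp hi
    have hpd : p^s / p^i = p^(s-i) := Nat.pow_div his.le hp.pos
    have hz : p^s / p^i % p = 0 := by
      rw [hpd, show s - i = (s-i-1)+1 by omega, pow_succ']
      exact Nat.mul_mod_right p _
    rw [hz, Nat.choose_zero_right]
  rw [Finset.prod_congr rfl hprod, Finset.prod_const_one] at h
  have := (ZMod.intCast_eq_intCast_iff _ _ _).mpr h
  push_cast at this
  simpa using this

lemma exists_pow_decomp (p n : ℕ) (hp : p.Prime) (hn0 : n ≠ 0) (hdvd : p ∣ n) :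
    ∃ s t, 1 ≤ s ∧ n = p^s * t ∧ ¬ p ∣ t ∧ p^s ≤ n := by
  refine ⟨n.factorization p, n / p ^ n.factorization p,
    hp.factorization_pos_of_dvd hn0 hdvd, ?_, Nat.not_dvd_ordCompl hp hn0,
    Nat.ordProj_le p hn0⟩
  exact (Nat.ordProj_mul_ordCompl_eq_self n p).symm

theorem fnkP_selfReciprocal_even (p n k : ℕ) (hp : p.Prime) (hpodd : Odd p)
    (hk : k ≤ p - 1) (hn : 1 < n) (hev : Even n) :
    (fnkP p n k).reverse = fnkP p n k ↔
      k = 0 ∨ (k = 2 ∧ ¬∃ l : ℕ, 0 < l ∧ n = 2 * l * p) := by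
  haveI : Fact p.Prime := ⟨hp⟩
  have hp3 : 3 ≤ p := by
    rcases hpodd with ⟨c, hc⟩
    have := hp.two_le; omega
  haveI : NeZero p := ⟨by omega⟩
  obtain ⟨m, hm⟩ : ∃ m, n = 2 * m := by rcases hev with ⟨c, hc⟩; exact ⟨c, by omega⟩
  have hm1 : 1 ≤ m := by omega
  have hkp : k < p := by omega
  have hval := ZMod.val_cast_of_lt (n := p) hkp
  have hc0 : (k : ZMod p) = 0 ↔ k = 0 := by
    constructor
    · intro h; rw [h, ZMod.val_zero] at hval; omega
    · intro h; simp [h]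
  have hc2 : (k : ZMod p) = 2 ↔ k = 2 := by
    have h2 : ((2:ℕ) : ZMod p) = (2 : ZMod p) := by push_cast; ring
    constructor
    · intro h
      rw [h, ← h2, ZMod.val_cast_of_lt (by omega)] at hval; omega
    · intro h; rw [h, ← h2]
  have h2ne : (2 : ZMod p) ≠ 0 := by
    have h2 : ((2:ℕ) : ZMod p) = (2 : ZMod p) := by push_cast; ring
    rw [← h2, Ne, ZMod.natCast_eq_zero_iff]
    intro hd
    have := Nat.le_of_dvd (by norm_num) hd; omega
  have hcond : (∃ l : ℕ, 0 < l ∧ n = 2 * l * p) ↔ p ∣ n := by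
    constructor
    · rintro ⟨l, _, rfl⟩; exact ⟨2*l, by ring⟩
    · rintro ⟨t, ht⟩
      have htev : Even t := by
        by_contra hodd'
        have : Odd (p * t) := hpodd.mul (Nat.not_even_iff_odd.mp hodd')
        rw [← ht] at this
        exact (Nat.not_odd_iff_even.mpr hev) this
      rcases htev with ⟨l, hl⟩
      have htn : t ≠ 0 := by rintro rfl; simp at ht; omega
      exact ⟨l, by omega, by rw [ht, hl]; ring⟩
  -- the key contradiction machine for `p ∣ n` detection
  constructor
  · intro hrev
    by_cases hk0 : (k : ZMod p) = 0
    · exact Or.inl (hc0.mp hk0)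
    by_cases hk2 : (k : ZMod p) = 2
    · -- k = 2 : show ¬ p ∣ n
      refine Or.inr ⟨hc2.mp hk2, ?_⟩
      rw [hcond]
      intro hdvd
      obtain ⟨s, t, hs1, hst, hpt, hsn⟩ := exists_pow_decomp p n hp (by omega) hdvd
      have hk2' : k = 2 := hc2.mp hk2
      subst hk2'
      -- f ≠ 0
      have hps_odd : Odd (p ^ s) := hpodd.pow
      obtain ⟨c, hc⟩ := hps_odd
      have hco : ∀ j, (fnkP p n 2).coeff j = 2 * (n.choose (2*j+1) : ZMod p) :=
        coeff_fnkP_two p n hn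
      have htne : (t : ZMod p) ≠ 0 := by
        rw [Ne, ZMod.natCast_eq_zero_iff]; exact hpt
      have hfc : (fnkP p n 2).coeff c ≠ 0 := by
        rw [hco c, show 2*c+1 = p^s by omega, hst, cast_choose_pow p s t hp]
        exact mul_ne_zero h2ne htne
      have hfne : fnkP p n 2 ≠ 0 := fun h => hfc (by rw [h]; simp)
      have hlead : (fnkP p n 2).coeff ((fnkP p n 2).natDegree) ≠ 0 := by
        rw [← Polynomial.leadingCoeff]
        exact Polynomial.leadingCoeff_ne_zero.mpr hfne
      have h0 : (fnkP p n 2).coeff 0 = 0 := by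
        rw [hco 0, show 2*0+1 = 1 from rfl, Nat.choose_one_right,
          (ZMod.natCast_eq_zero_iff n p).mpr hdvd, mul_zero]
      have := congrArg (fun q => q.coeff 0) hrev
      simp only [Polynomial.coeff_reverse, Polynomial.revAt_zero] at this
      exact hlead (this.trans h0)
    · -- k ≠ 0, k ≠ 2 : contradiction
      exfalso
      have hlead : (fnkP p n k).coeff m ≠ 0 := by
        rw [coeff_fnkP_half p n k m hm hm1]
        intro h
        exact hk2 (by rwa [sub_eq_zero, eq_comm] at h)
      have hdeg : (fnkP p n k).natDegree = m := by
        apply le_antisymm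
        · rw [Polynomial.natDegree_le_iff_coeff_eq_zero]
          intro N hN; exact coeff_fnkP_top p n k m hm hm1 hN
        · exact Polynomial.le_natDegree_of_ne_zero hlead
      have hsym : ∀ j ≤ m, (fnkP p n k).coeff j = (fnkP p n k).coeff (m - j) := by
        intro j hj
        have := congrArg (fun q => q.coeff j) hrev
        simp only [Polynomial.coeff_reverse, hdeg, Polynomial.revAt_le hj] at this
        exact this.symm
      -- coeff 0 vs coeff m gives p ∣ n
      have hcast : ((n - 1 : ℕ) : ZMod p) = (n : ZMod p) - 1 := by
        rw [Nat.cast_sub (by omega)]; simp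
      have h0m := hsym 0 (by omega)
      rw [Nat.sub_zero, coeff_fnkP_zero p n k hn, coeff_fnkP_half p n k m hm hm1, hcast] at h0m
      have hkn : (k : ZMod p) * (n : ZMod p) = 0 := by linear_combination h0m
      have hnz : (n : ZMod p) = 0 := by
        rcases mul_eq_zero.mp hkn with h | h
        · exact absurd h hk0
        · exact h
      have hdvd : p ∣ n := (ZMod.natCast_eq_zero_iff n p).mp hnz
      -- chain of vanishing odd binomials
      have hchain : ∀ j, j ≤ m - 1 → ((n.choose (2*j+1) : ℕ) : ZMod p) = 0 := by
        intro j
        induction j with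
        | zero => intro _; rw [Nat.choose_one_right]; exact hnz
        | succ i ih =>
          intro hi
          have hm2 : 2 ≤ m := by omega
          have hmir := coeff_fnkP_mirror p n k m hm (j := i+1) (by omega) hi hm2
          rw [← hsym (i+1) (by omega)] at hmir
          have : (k : ZMod p) * ((n.choose (2*(i+1)+1) : ZMod p)
              - (n.choose (2*(i+1)-1) : ZMod p)) = 0 := by linear_combination -hmir
          rcases mul_eq_zero.mp this with h | h
          · exact absurd h hk0
          · rw [sub_eq_zero] at h
            rw [h, show 2*(i+1)-1 = 2*i+1 by omega, ih (by omega)]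
      obtain ⟨s, t, hs1, hst, hpt, hsn⟩ := exists_pow_decomp p n hp (by omega) hdvd
      have hps_odd : Odd (p ^ s) := hpodd.pow
      obtain ⟨c, hc⟩ := hps_odd
      have hcm : c ≤ m - 1 := by omega
      have := hchain c hcm
      rw [show 2*c+1 = p^s by omega, hst, cast_choose_pow p s t hp] at this
      exact (by rw [Ne, ZMod.natCast_eq_zero_iff]; exact hpt : (t:ZMod p) ≠ 0) this
  · rintro (rfl | ⟨rfl, hnl⟩)
    · -- k = 0
      have hco : ∀ j, (fnkP p n 0).coeff j = 2 * (n.choose (2*j) : ZMod p) :=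
        coeff_fnkP_zero_k p n hn
      have hlead : (fnkP p n 0).coeff m ≠ 0 := by
        rw [hco m, show 2*m = n by omega, Nat.choose_self]
        simpa using h2ne
      have hdeg : (fnkP p n 0).natDegree = m := by
        apply le_antisymm
        · rw [Polynomial.natDegree_le_iff_coeff_eq_zero]
          intro N hN
          rw [hco N, Nat.choose_eq_zero_of_lt (by omega)]; simp
        · exact Polynomial.le_natDegree_of_ne_zero hlead
      ext j
      rw [Polynomial.coeff_reverse, hdeg]
      by_cases hj : j ≤ m
      · rw [Polynomial.revAt_le hj, hco, hco,
          show 2*(m-j) = n - (2*j) by omega, Nat.choose_symm (by omega)]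
      · rw [Polynomial.revAt_eq_self_of_lt (by omega)]
    · -- k = 2, p ∤ n
      have hnd : ¬ p ∣ n := fun h => hnl (hcond.mpr h)
      have hnne : (n : ZMod p) ≠ 0 := by
        rw [Ne, ZMod.natCast_eq_zero_iff]; exact hnd
      have hco : ∀ j, (fnkP p n 2).coeff j = 2 * (n.choose (2*j+1) : ZMod p) :=
        coeff_fnkP_two p n hn
      have hlead : (fnkP p n 2).coeff (m-1) ≠ 0 := by
        rw [hco (m-1), show 2*(m-1)+1 = n - 1 by omega, Nat.choose_symm (by omega),
          Nat.choose_one_right]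
        exact mul_ne_zero h2ne hnne
      have hdeg : (fnkP p n 2).natDegree = m - 1 := by
        apply le_antisymm
        · rw [Polynomial.natDegree_le_iff_coeff_eq_zero]
          intro N hN
          rw [hco N, Nat.choose_eq_zero_of_lt (by omega)]; simp
        · exact Polynomial.le_natDegree_of_ne_zero hlead
      ext j
      rw [Polynomial.coeff_reverse, hdeg]
      by_cases hj : j ≤ m - 1
      · rw [Polynomial.revAt_le hj, hco, hco,
          show 2*(m-1-j)+1 = n - (2*j+1) by omega, Nat.choose_symm (by omega)]
      · rw [Polynomial.revAt_eq_self_of_lt (by omega)]
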